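/- Let n ≥ 1 and r > 0. For the uniform density on [0,1], the uniform quantizer codebook x_i = (2i-1)/(2n) achieves ∫₀¹ min_i |x_i - q|^r dq = 1/((1+r)·(2n)^r), and this is the minimum over all codebooks of size n. -/

import Mathlib

open MeasureTheory Set Real intervalIntegral
open scoped ENNReal


section aux
variable {n : ℕ} {r : ℝ}

-- inf attained
lemma aux_exists_min (hn : 1 ≤ n) (x : Fin n → ℝ) (q : ℝ) :
    ∃ i₀ : Fin n, ∀ i, |x i₀ - q| ≤ |x i - q| := by
  have : Nonempty (Fin n) := Fin.pos_iff_nonempty.mp hn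
  exact Finite.exists_min fun i => |x i - q|

lemma aux_iInf_eq (hr : 0 < r) (x : Fin n → ℝ) (q : ℝ) (i₀ : Fin n)
    (hmin : ∀ i, |x i₀ - q| ≤ |x i - q|) :
    (⨅ i, |x i - q| ^ r) = |x i₀ - q| ^ r := by
  have : Nonempty (Fin n) := ⟨i₀⟩
  refine le_antisymm (ciInf_le (Finite.bddBelow_range _) i₀) (le_ciInf fun i => ?_)
  exact Real.rpow_le_rpow (abs_nonneg _) (hmin i) hr.le

lemma aux_infDist (x : Fin n → ℝ) (q : ℝ) (i₀ : Fin n)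
    (hmin : ∀ i, |x i₀ - q| ≤ |x i - q|) :
    Metric.infDist q (Set.range x) = |x i₀ - q| := by
  refine le_antisymm ?_ ?_
  · calc _ ≤ dist q (x i₀) := Metric.infDist_le_dist_of_mem (Set.mem_range_self i₀)
      _ = |x i₀ - q| := by rw [dist_comm, Real.dist_eq]
  · rw [Metric.infDist_eq_iInf]
    have : Nonempty (Set.range x) := ⟨x i₀, Set.mem_range_self i₀⟩
    refine le_ciInf ?_
    rintro ⟨y, i, rfl⟩
    simpa [Real.dist_eq, abs_sub_comm] using hmin i

lemma aux_cont (hr : 0 < r) (hn : 1 ≤ n) (x : Fin n → ℝ) :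
    Continuous fun q => ⨅ i, |x i - q| ^ r := by
  have h : (fun q => ⨅ i, |x i - q| ^ r) = fun q => Metric.infDist q (Set.range x) ^ r := by
    funext q
    obtain ⟨i₀, hmin⟩ := aux_exists_min hn x q
    rw [aux_iInf_eq hr x q i₀ hmin, aux_infDist x q i₀ hmin]
  rw [h]
  exact (Metric.continuous_infDist_pt _).rpow_const fun q => Or.inr hr.le

end aux


section part1
variable {n : ℕ} {r : ℝ}

lemma cell_min (hn : 1 ≤ n) (xu : Fin n → ℝ)
    (hxu : ∀ i : Fin n, xu i = (2 * (i : ℝ) + 1) / (2 * n))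
    (k : Fin n) (q : ℝ) (hq : q ∈ Icc ((k : ℝ) / n) (((k : ℝ) + 1) / n)) (i : Fin n) :
    |xu k - q| ≤ |xu i - q| := by
  have hN : (0:ℝ) < n := by exact_mod_cast Nat.pos_of_ne_zero (by omega)
  have hk1 : (k : ℝ) ≤ q * n := (div_le_iff₀ hN).mp hq.1
  have hk2 : q * n ≤ (k : ℝ) + 1 := (le_div_iff₀ hN).mp hq.2
  have e1 : xu k - q = ((2 * (k:ℝ) + 1) - q * (2*n)) / (2*n) := by
    rw [hxu k]; field_simp
  have e2 : xu i - q = ((2 * (i:ℝ) + 1) - q * (2*n)) / (2*n) := by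
    rw [hxu i]; field_simp
  have hk0 : |xu k - q| ≤ 1 / (2*n) := by
    rw [e1, abs_div, abs_of_pos (by positivity : (0:ℝ) < 2*n),
      div_le_div_iff_of_pos_right (by positivity)]
    rw [abs_le]; constructor <;> nlinarith
  rcases eq_or_ne i k with rfl | hik
  · exact le_refl _
  · refine hk0.trans ?_
    rw [e2, abs_div, abs_of_pos (by positivity : (0:ℝ) < 2*n),
      div_le_div_iff_of_pos_right (by positivity)]
    rcases lt_or_gt_of_ne (fun h => hik (Fin.ext h) : (i:ℕ) ≠ (k:ℕ)) with h | h
    · have : (i:ℝ) + 1 ≤ (k:ℝ) := by exact_mod_cast h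
      have : 2 * (i:ℝ) + 1 - q * (2*n) ≤ -1 := by nlinarith
      calc (1:ℝ) ≤ -(2 * (i:ℝ) + 1 - q * (2*n)) := by linarith
        _ ≤ |2 * (i:ℝ) + 1 - q * (2*n)| := neg_le_abs _
    · have : (k:ℝ) + 1 ≤ (i:ℝ) := by exact_mod_cast h
      have h2 : (1:ℝ) ≤ 2 * (i:ℝ) + 1 - q * (2*n) := by nlinarith
      exact h2.trans (le_abs_self _)

lemma mid_integral (hr : 0 < r) {a b c : ℝ} (hca : c - a = b - c) (hac : a ≤ c) :
    ∫ q in a..b, |c - q| ^ r = 2 * (c - a) ^ (r+1) / (r+1) := by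
  have hcb : c ≤ b := by linarith
  have hcont : Continuous fun q : ℝ => |c - q| ^ r :=
    ((continuous_const.sub continuous_id).abs.rpow_const fun x => Or.inr hr.le)
  have hsplit := integral_add_adjacent_intervals
    (hcont.intervalIntegrable (μ := volume) a c) (hcont.intervalIntegrable (μ := volume) c b)
  have h1 : ∫ q in a..c, |c - q| ^ r = (c - a) ^ (r+1) / (r+1) := by
    rw [integral_congr (g := fun q => (c - q) ^ r) ?_]
    · rw [show (∫ q in a..c, (c - q) ^ r) = ∫ q in a..c, (fun u => u ^ r) (c - q) from rfl,
        integral_comp_sub_left (fun u => u ^ r) c, sub_self,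
        integral_rpow (Or.inl (by linarith))]
      rw [Real.zero_rpow (by linarith)]; ring
    · intro q hq
      rw [uIcc_of_le hac] at hq
      simp only [abs_of_nonneg (by linarith [hq.2] : (0:ℝ) ≤ c - q)]
  have h2 : ∫ q in c..b, |c - q| ^ r = (c - a) ^ (r+1) / (r+1) := by
    rw [integral_congr (g := fun q => (q - c) ^ r) ?_]
    · rw [show (∫ q in c..b, (q - c) ^ r) = ∫ q in c..b, (fun u => u ^ r) (q - c) from rfl,
        integral_comp_sub_right (fun u => u ^ r) c, sub_self,
        integral_rpow (Or.inl (by linarith))]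
      rw [Real.zero_rpow (by linarith), ← hca]; ring
    · intro q hq
      rw [uIcc_of_le hcb] at hq
      have h3 : |c - q| = q - c := by
        rw [abs_of_nonpos (by linarith [hq.1] : c - q ≤ 0), neg_sub]
      simp only [h3]
  rw [← hsplit, h1, h2]; ring
end part1

section val
variable {n : ℕ} {r : ℝ}

lemma value (hr : 0 < r) (hn : 1 ≤ n) (xu : Fin n → ℝ)
    (hxu : ∀ i : Fin n, xu i = (2 * (i : ℝ) + 1) / (2 * n)) :
    (∫ q in (0:ℝ)..1, ⨅ i : Fin n, |xu i - q| ^ r) = 1 / ((1 + r) * (2 * n) ^ r) := by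
  have hN : (0:ℝ) < n := by exact_mod_cast Nat.pos_of_ne_zero (by omega)
  have hcont := aux_cont hr hn xu
  have key : ∀ k ∈ Finset.range n,
      (∫ q in ((k:ℝ)/n)..(((k:ℝ)+1)/n), ⨅ i, |xu i - q| ^ r)
        = 2 * (1/(2*(n:ℝ)))^(r+1)/(r+1) := by
    intro k hk
    rw [Finset.mem_range] at hk
    have hle : (k:ℝ)/n ≤ ((k:ℝ)+1)/n := by
      rw [div_le_div_iff_of_pos_right hN]; linarith
    set kf : Fin n := ⟨k, hk⟩ with hkf
    have hca : (2*(k:ℝ)+1)/(2*n) - (k:ℝ)/n = 1/(2*n) := by field_simp; ring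
    have hcb : ((k:ℝ)+1)/n - (2*(k:ℝ)+1)/(2*n) = 1/(2*n) := by field_simp; ring
    have hac : (k:ℝ)/n ≤ (2*(k:ℝ)+1)/(2*n) := by linarith [hca, div_pos one_pos (by positivity : (0:ℝ) < 2*n)]
    rw [integral_congr (g := fun q => |xu kf - q| ^ r) ?_]
    · have hc : xu kf = (2*(k:ℝ)+1)/(2*n) := by rw [hxu kf]
      rw [hc, mid_integral hr (by linarith) hac, hca]
    · intro q hq
      rw [uIcc_of_le hle] at hq
      exact aux_iInf_eq hr xu q kf (fun i => cell_min hn xu hxu kf q hq i)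
  have hint : ∀ k, k < n → IntervalIntegrable (fun q => ⨅ i, |xu i - q| ^ r) volume
      ((k:ℝ)/n) (((k+1:ℕ):ℝ)/n) := fun k _ => hcont.intervalIntegrable _ _
  have hsum := intervalIntegral.sum_integral_adjacent_intervals (a := fun k : ℕ => (k:ℝ)/n)
    (μ := volume) hint
  simp only [Nat.cast_zero, zero_div, div_self hN.ne'] at hsum
  have hkey' : ∀ k ∈ Finset.range n,
      (∫ q in ((k:ℝ)/n)..(((k+1:ℕ):ℝ)/n), ⨅ i, |xu i - q| ^ r)
        = 2 * (1/(2*(n:ℝ)))^(r+1)/(r+1) := by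
    intro k hk
    have : ((k+1:ℕ):ℝ) = (k:ℝ)+1 := by push_cast; ring
    rw [this]; exact key k hk
  rw [← hsum, Finset.sum_congr rfl hkey', Finset.sum_const, Finset.card_range, nsmul_eq_mul]
  have hpow : (1/(2*(n:ℝ)))^(r+1) = 1/((2*(n:ℝ))^r * (2*n)) := by
    rw [Real.div_rpow zero_le_one (by positivity), Real.one_rpow,
      Real.rpow_add (by positivity), Real.rpow_one]
  rw [hpow]
  have h2n : ((2*(n:ℝ))^r) ≠ 0 := by positivity
  have hr1 : (1:ℝ) + r ≠ 0 := by linarith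
  field_simp
  ring
end val


section part2
variable {n : ℕ} {r : ℝ}


lemma lower (hr : 0 < r) (hn : 1 ≤ n) (x : Fin n → ℝ) :
    1 / ((1 + r) * (2 * (n:ℝ)) ^ r) ≤ ∫ q in (0:ℝ)..1, ⨅ i : Fin n, |x i - q| ^ r := by
  have hN : (0:ℝ) < n := by exact_mod_cast Nat.pos_of_ne_zero (by omega)
  set g : ℝ → ℝ := fun q => ⨅ i, |x i - q| ^ r with hg
  have hgc : Continuous g := aux_cont hr hn x
  have hg0 : ∀ q, 0 ≤ g q := fun q => Real.iInf_nonneg fun i => Real.rpow_nonneg (abs_nonneg _) r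
  set μ : Measure ℝ := volume.restrict (Set.Ioc (0:ℝ) 1) with hμ
  have hμ_univ : μ Set.univ = 1 := by
    rw [hμ, Measure.restrict_apply_univ, Real.volume_Ioc]
    norm_num
  have hfin : ∀ s : Set ℝ, μ s ≠ ⊤ := fun s =>
    ((measure_mono (subset_univ s)).trans_lt (by rw [hμ_univ]; exact ENNReal.one_lt_top)).ne
  have hint : Integrable g μ := hgc.integrableOn_Ioc
  have layercake := hint.integral_eq_integral_meas_lt (Filter.Eventually.of_forall hg0)
  have h01 : (∫ q in (0:ℝ)..1, g q) = ∫ q, g q ∂μ := by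
    rw [intervalIntegral.integral_of_le zero_le_one]
  set F : ℝ → ℝ := fun t => (μ {a | t < g a}).toReal with hF
  have hFanti : Antitone F := by
    intro s t hst
    exact ENNReal.toReal_mono (hfin _) (measure_mono fun a ha => lt_of_le_of_lt hst ha)
  have hFnn : ∀ t, 0 ≤ F t := fun t => ENNReal.toReal_nonneg
  have hF1 : ∀ t, F t ≤ 1 := by
    intro t
    have := ENNReal.toReal_mono (hfin Set.univ) (measure_mono (subset_univ {a | t < g a}))
    rwa [hμ_univ, ENNReal.toReal_one] at this
  obtain ⟨q0, _, hq0'⟩ := isCompact_Icc.exists_isMaxOn (s := Set.Icc (0:ℝ) 1)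
    ⟨0, left_mem_Icc.mpr zero_le_one⟩ hgc.continuousOn
  have hq0 : ∀ q ∈ Set.Icc (0:ℝ) 1, g q ≤ g q0 := fun q hq => hq0' hq
  set M : ℝ := g q0 with hM
  have hSmeas : ∀ t : ℝ, MeasurableSet {a | t < g a} := fun t =>
    measurableSet_lt measurable_const hgc.measurable
  have hFzero : ∀ t, M < t → F t = 0 := by
    intro t ht
    rw [hF]
    have : μ {a | t < g a} = 0 := by
      rw [hμ, Measure.restrict_apply (hSmeas t)]
      convert measure_empty (μ := (volume : Measure ℝ))
      ext q
      simp only [mem_inter_iff, mem_setOf_eq, mem_empty_iff_false, iff_false, not_and]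
      intro hq1 hq2
      exact absurd (hq0 q (Ioc_subset_Icc_self hq2)) (by linarith)
    simp [this]
  have hFmeas : Measurable F :=
    Measurable.ennreal_toReal (Antitone.measurable
      (fun s t hst => measure_mono fun a ha => lt_of_le_of_lt hst ha))
  set M' : ℝ := max M 1 with hM'
  have hFint : IntegrableOn F (Set.Ioi (0:ℝ)) volume := by
    apply Integrable.mono' (g := Set.indicator (Set.Ioc (0:ℝ) M') fun _ => (1:ℝ))
    · rw [integrable_indicator_iff measurableSet_Ioc]
      have hlt : (volume.restrict (Set.Ioi (0:ℝ))) (Set.Ioc (0:ℝ) M') < ⊤ :=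
        lt_of_le_of_lt (Measure.restrict_apply_le _ _)
          (by rw [Real.volume_Ioc]; exact ENNReal.ofReal_lt_top)
      exact integrableOn_const hlt.ne
    · exact hFmeas.aestronglyMeasurable
    · rw [ae_restrict_iff' measurableSet_Ioi]
      refine Filter.Eventually.of_forall fun t ht => ?_
      rw [Real.norm_eq_abs, abs_of_nonneg (hFnn t)]
      by_cases hle : t ≤ M'
      · rw [Set.indicator_of_mem (Set.mem_Ioc.mpr ⟨ht, hle⟩)]
        exact hF1 t
      · rw [Set.indicator_of_notMem (fun hmem => hle hmem.2), hFzero t]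
        push_neg at hle
        exact lt_of_le_of_lt (le_max_left _ _) hle
  set T : ℝ := (1/(2*(n:ℝ)))^r with hT
  have hT0 : 0 < T := Real.rpow_pos_of_pos (by positivity) r
  have hlow : ∀ t ∈ Set.Ioc (0:ℝ) T, 1 - 2*n*t^(1/r) ≤ F t := by
    intro t ht
    set s : ℝ := t^(1/r) with hs
    have hs0 : 0 < s := Real.rpow_pos_of_pos ht.1 _
    have hts : t = s^r := by
      rw [hs, ← Real.rpow_mul ht.1.le, one_div_mul_cancel hr.ne', Real.rpow_one]
    have hs_le : s ≤ 1/(2*(n:ℝ)) := by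
      have h1 : s ≤ T^(1/r) := Real.rpow_le_rpow ht.1.le ht.2 (by positivity)
      have h2 : T^(1/r) = 1/(2*(n:ℝ)) := by
        rw [hT, ← Real.rpow_mul (by positivity), mul_one_div_cancel hr.ne', Real.rpow_one]
      linarith
    have cover : Set.Ioc (0:ℝ) 1 ⊆ {a | t < g a} ∪ ⋃ i : Fin n, Set.Icc (x i - s) (x i + s) := by
      intro q hq
      by_cases h : t < g q
      · exact Or.inl h
      · push_neg at h
        obtain ⟨i₀, hmin⟩ := aux_exists_min hn x q
        have h1 : |x i₀ - q| ^ r ≤ s ^ r := by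
          rw [← aux_iInf_eq hr x q i₀ hmin, ← hts]; exact h
        have h2 : |x i₀ - q| ≤ s := (Real.rpow_le_rpow_iff (abs_nonneg _) hs0.le hr).mp h1
        have h3 := abs_le.mp h2
        exact Or.inr (Set.mem_iUnion.mpr ⟨i₀, ⟨by linarith [h3.2], by linarith [h3.1]⟩⟩)
    have hmeasbound : (1:ℝ≥0∞) ≤ μ {a | t < g a} + ENNReal.ofReal (2*n*s) := by
      have hv1 : (volume : Measure ℝ) (Set.Ioc (0:ℝ) 1) = 1 := by
        rw [Real.volume_Ioc]; norm_num
      have hsub : Set.Ioc (0:ℝ) 1 ⊆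
          ({a | t < g a} ∩ Set.Ioc (0:ℝ) 1) ∪ ⋃ i : Fin n, Set.Icc (x i - s) (x i + s) := by
        intro q hq
        rcases cover hq with h | h
        · exact Or.inl ⟨h, hq⟩
        · exact Or.inr h
      have hun : (volume : Measure ℝ) (⋃ i : Fin n, Set.Icc (x i - s) (x i + s))
          ≤ ENNReal.ofReal (2*n*s) := by
        refine (measure_iUnion_fintype_le _ _).trans ?_
        have : ∀ i : Fin n, (volume : Measure ℝ) (Set.Icc (x i - s) (x i + s))
            = ENNReal.ofReal (2*s) := by
          intro i
          rw [Real.volume_Icc]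
          congr 1
          ring
        rw [Finset.sum_congr rfl fun i _ => this i, Finset.sum_const, Finset.card_univ,
          Fintype.card_fin, nsmul_eq_mul, ← ENNReal.ofReal_natCast n, ← ENNReal.ofReal_mul
          (by positivity)]
        exact ENNReal.ofReal_le_ofReal (le_of_eq (by ring))
      calc (1:ℝ≥0∞) = volume (Set.Ioc (0:ℝ) 1) := hv1.symm
        _ ≤ volume (({a | t < g a} ∩ Set.Ioc (0:ℝ) 1) ∪ ⋃ i : Fin n, Set.Icc (x i - s) (x i + s)) :=
            measure_mono hsub
        _ ≤ volume ({a | t < g a} ∩ Set.Ioc (0:ℝ) 1)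
            + volume (⋃ i : Fin n, Set.Icc (x i - s) (x i + s)) := measure_union_le _ _
        _ ≤ μ {a | t < g a} + ENNReal.ofReal (2*n*s) := by
            rw [hμ, Measure.restrict_apply (hSmeas t)]
            exact add_le_add le_rfl hun
    have h2ns : 2*(n:ℝ)*s ≤ 1 := by
      have := mul_le_mul_of_nonneg_left hs_le (by positivity : (0:ℝ) ≤ 2*n)
      rw [mul_one_div, mul_div_assoc] at this
      calc 2*(n:ℝ)*s ≤ 2*n*(1/(2*n)) := by nlinarith
        _ = 1 := by field_simp
    have hof : ENNReal.ofReal (1 - 2*n*s) ≤ μ {a | t < g a} := by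
      rw [← ENNReal.add_le_add_iff_right (a := ENNReal.ofReal (2*n*s)) ENNReal.ofReal_ne_top,
        ← ENNReal.ofReal_add (by linarith) (by positivity)]
      have heq : (1 - 2*(n:ℝ)*s) + 2*n*s = 1 := by ring
      rw [heq, ENNReal.ofReal_one]
      exact hmeasbound
    have := ENNReal.toReal_mono (hfin _) hof
    rwa [ENNReal.toReal_ofReal (by linarith)] at this
  have step1 : (∫ t in Set.Ioc (0:ℝ) T, F t) ≤ ∫ t in Set.Ioi (0:ℝ), F t :=
    setIntegral_mono_set hFint (Filter.Eventually.of_forall fun t => hFnn t)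
      (HasSubset.Subset.eventuallyLE Set.Ioc_subset_Ioi_self)
  have hhc : Continuous fun t : ℝ => 1 - 2*(n:ℝ)*t^(1/r) :=
    continuous_const.sub (continuous_const.mul
      (continuous_id.rpow_const fun _ => Or.inr (by positivity)))
  have step2 : (∫ t in Set.Ioc (0:ℝ) T, (1 - 2*(n:ℝ)*t^(1/r))) ≤ ∫ t in Set.Ioc (0:ℝ) T, F t :=
    setIntegral_mono_on hhc.integrableOn_Ioc (hFint.mono_set Set.Ioc_subset_Ioi_self)
      measurableSet_Ioc hlow
  have step3 : (∫ t in Set.Ioc (0:ℝ) T, (1 - 2*(n:ℝ)*t^(1/r))) = 1 / ((1 + r) * (2 * (n:ℝ)) ^ r) := by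
    have hip : IntervalIntegrable (fun t : ℝ => t^(1/r)) volume 0 T :=
      (continuous_id.rpow_const fun _ => Or.inr (by positivity)).intervalIntegrable 0 T
    rw [← intervalIntegral.integral_of_le hT0.le,
      intervalIntegral.integral_sub intervalIntegrable_const (hip.const_mul _),
      intervalIntegral.integral_const, intervalIntegral.integral_const_mul,
      integral_rpow (Or.inl (by linarith [one_div_pos.mpr hr]))]
    have hz : (0:ℝ)^(1/r+1) = 0 := Real.zero_rpow (by positivity)
    have hTp : T^(1/r+1) = (1/(2*(n:ℝ))) * T := by
      rw [Real.rpow_add hT0, Real.rpow_one]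
      congr 1
      rw [hT, ← Real.rpow_mul (by positivity), mul_one_div_cancel hr.ne', Real.rpow_one]
    rw [hz, hTp]
    have hTv : T = 1/((2*(n:ℝ))^r) := by
      rw [hT, Real.div_rpow zero_le_one (by positivity), Real.one_rpow]
    rw [hTv]
    have hA : (0:ℝ) < (2*(n:ℝ))^r := by positivity
    have h1r : (0:ℝ) < 1/r + 1 := by positivity
    field_simp
    simp only [mul_zero, sub_zero, smul_eq_mul, mul_one, mul_one_div_cancel hA.ne']
    ring
  calc 1 / ((1 + r) * (2 * (n:ℝ)) ^ r) = ∫ t in Set.Ioc (0:ℝ) T, (1 - 2*(n:ℝ)*t^(1/r)) := step3.symm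
    _ ≤ ∫ t in Set.Ioc (0:ℝ) T, F t := step2
    _ ≤ ∫ t in Set.Ioi (0:ℝ), F t := step1
    _ = ∫ q, g q ∂μ := layercake.symm
    _ = ∫ q in (0:ℝ)..1, g q := h01.symm

end part2


theorem stmt_8 (r : ℝ) (hr : 0 < r) (n : ℕ) (hn : 1 ≤ n)
    (D : (Fin n → ℝ) → ℝ)
    (hD : ∀ x : Fin n → ℝ, D x = ∫ q in (0:ℝ)..1, ⨅ i : Fin n, |x i - q| ^ r)
    (xu : Fin n → ℝ) (hxu : ∀ i : Fin n, xu i = (2 * (i : ℝ) + 1) / (2 * n)) :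
    D xu = 1 / ((1 + r) * (2 * n) ^ r) ∧ (∀ x : Fin n → ℝ, D xu ≤ D x) := by
  have hval : D xu = 1 / ((1 + r) * (2 * (n:ℝ)) ^ r) := by
    rw [hD xu]; exact value hr hn xu hxu
  refine ⟨hval, fun x => ?_⟩
  rw [hval, hD x]
  exact lower hr hn x
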